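/- Let $M, H$ be positive integers and $(a(m,h))_{(m,h) \in \mathbb{Z}^2}$ complex numbers vanishing outside $[1,M] \times [1,H]$. Set $S = \sum_{(m,h)} a(m,h)$. Then for any integers $1 \leq Q \leq M$ and $1 \leq R \leq H$: $|S|^2 \leq C \frac{MH}{QR} \sum_{|q| < Q} \sum_{|r| < R} \left(1 - \frac{|q|}{Q}\right)\left(1 - \frac{|r|}{R}\right) \left|\sum_{(m,h) \in \mathbb{Z}^2} a(m+q, h)\, \overline{a(m, h+r)}\right|$ for an absolute constant $C$. -/

import Mathlib

open Finset

private lemma sum_support_eq {β : Type*} [AddCommMonoid β] (s t : Finset ℤ) (g : ℤ → β)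
    (h : ∀ x, g x ≠ 0 → x ∈ s ∧ x ∈ t) : ∑ x ∈ s, g x = ∑ x ∈ t, g x := by
  have h1 : ∑ x ∈ s ∪ t, g x = ∑ x ∈ s, g x :=
    (Finset.sum_subset Finset.subset_union_left fun x _ hxs => by
      by_contra hg; exact hxs (h x hg).1).symm
  have h2 : ∑ x ∈ s ∪ t, g x = ∑ x ∈ t, g x :=
    (Finset.sum_subset Finset.subset_union_right fun x _ hxt => by
      by_contra hg; exact hxt (h x hg).2).symm
  rw [← h1, h2]

private lemma sum_shift (a b c : ℤ) (f : ℤ → ℂ) :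
    ∑ x ∈ Icc (a + c) (b + c), f x = ∑ x ∈ Icc a b, f (x + c) := by
  rw [← Finset.map_add_right_Icc, Finset.sum_map]
  rfl

private lemma shiftA (M H Q R : ℕ) (a : ℤ → ℤ → ℂ)
    (ha : ∀ m h : ℤ, (m < 1 ∨ (M : ℤ) < m ∨ h < 1 ∨ (H : ℤ) < h) → a m h = 0)
    (q r : ℤ) (hq0 : 0 ≤ q) (hqQ : q < (Q:ℤ)) (hr0 : 0 ≤ r) (hrR : r < (R:ℤ)) :
    ∑ m ∈ Icc (1 - (Q:ℤ)) (M:ℤ), ∑ h ∈ Icc (1 - (R:ℤ)) (H:ℤ), a (m + q) (h + r)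
      = ∑ m ∈ Icc (1:ℤ) (M:ℤ), ∑ h ∈ Icc (1:ℤ) (H:ℤ), a m h := by
  have ham : ∀ m h : ℤ, a m h ≠ 0 → 1 ≤ m ∧ m ≤ (M:ℤ) ∧ 1 ≤ h ∧ h ≤ (H:ℤ) := by
    intro m h hmh
    refine ⟨?_, ?_, ?_, ?_⟩ <;> by_contra hc <;> exact hmh (ha m h (by omega))
  have hin : ∀ m : ℤ, ∑ h ∈ Icc (1 - (R:ℤ)) (H:ℤ), a (m + q) (h + r)
      = ∑ h ∈ Icc (1:ℤ) (H:ℤ), a (m + q) h := by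
    intro m
    calc ∑ h ∈ Icc (1 - (R:ℤ)) (H:ℤ), a (m + q) (h + r)
        = ∑ h ∈ Icc (1 - (R:ℤ) + r) ((H:ℤ) + r), a (m + q) h :=
          (sum_shift (1 - (R:ℤ)) (H:ℤ) r (fun h => a (m + q) h)).symm
      _ = ∑ h ∈ Icc (1:ℤ) (H:ℤ), a (m + q) h := by
          apply sum_support_eq
          intro h hh
          have := ham _ _ hh
          simp only [Finset.mem_Icc]
          omega
  rw [Finset.sum_congr rfl fun m _ => hin m]
  calc ∑ m ∈ Icc (1 - (Q:ℤ)) (M:ℤ), ∑ h ∈ Icc (1:ℤ) (H:ℤ), a (m + q) h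
      = ∑ m ∈ Icc (1 - (Q:ℤ) + q) ((M:ℤ) + q), ∑ h ∈ Icc (1:ℤ) (H:ℤ), a m h :=
        (sum_shift (1 - (Q:ℤ)) (M:ℤ) q (fun m => ∑ h ∈ Icc (1:ℤ) (H:ℤ), a m h)).symm
    _ = ∑ m ∈ Icc (1:ℤ) (M:ℤ), ∑ h ∈ Icc (1:ℤ) (H:ℤ), a m h := by
        apply sum_support_eq
        intro m hm
        obtain ⟨h, -, hah⟩ := Finset.exists_ne_zero_of_sum_ne_zero hm
        have := ham _ _ hah
        simp only [Finset.mem_Icc]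
        omega

private lemma corrA (M H Q R : ℕ) (a : ℤ → ℤ → ℂ)
    (ha : ∀ m h : ℤ, (m < 1 ∨ (M : ℤ) < m ∨ h < 1 ∨ (H : ℤ) < h) → a m h = 0)
    (q q' r r' : ℤ) (hq'0 : 0 ≤ q') (hq'Q : q' ≤ (Q:ℤ)) (hr'0 : 0 ≤ r') (hr'R : r' ≤ (R:ℤ)) :
    ∑ m ∈ Icc (1 - (Q:ℤ)) (M:ℤ), ∑ h ∈ Icc (1 - (R:ℤ)) (H:ℤ),
        a (m + q) (h + r) * (starRingEnd ℂ) (a (m + q') (h + r'))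
      = ∑ m ∈ Icc (1:ℤ) (M:ℤ), ∑ h ∈ Icc (1:ℤ) (H:ℤ),
        a (m + (q - q')) (h + (r - r')) * (starRingEnd ℂ) (a m h) := by
  have ham : ∀ m h : ℤ, a m h ≠ 0 → 1 ≤ m ∧ m ≤ (M:ℤ) ∧ 1 ≤ h ∧ h ≤ (H:ℤ) := by
    intro m h hmh
    refine ⟨?_, ?_, ?_, ?_⟩ <;> by_contra hc <;> exact hmh (ha m h (by omega))
  have hin : ∀ m : ℤ, ∑ h ∈ Icc (1 - (R:ℤ)) (H:ℤ),
      a (m + q) (h + r) * (starRingEnd ℂ) (a (m + q') (h + r'))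
      = ∑ h ∈ Icc (1:ℤ) (H:ℤ), a (m + q) (h + (r - r')) * (starRingEnd ℂ) (a (m + q') h) := by
    intro m
    calc ∑ h ∈ Icc (1 - (R:ℤ)) (H:ℤ), a (m + q) (h + r) * (starRingEnd ℂ) (a (m + q') (h + r'))
        = ∑ h ∈ Icc (1 - (R:ℤ)) (H:ℤ),
            a (m + q) ((h + r') + (r - r')) * (starRingEnd ℂ) (a (m + q') (h + r')) := by
          refine Finset.sum_congr rfl fun h _ => ?_
          rw [show h + r' + (r - r') = h + r by ring]
      _ = ∑ h ∈ Icc (1 - (R:ℤ) + r') ((H:ℤ) + r'),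
            a (m + q) (h + (r - r')) * (starRingEnd ℂ) (a (m + q') h) :=
          (sum_shift (1 - (R:ℤ)) (H:ℤ) r'
            (fun h => a (m + q) (h + (r - r')) * (starRingEnd ℂ) (a (m + q') h))).symm
      _ = ∑ h ∈ Icc (1:ℤ) (H:ℤ), a (m + q) (h + (r - r')) * (starRingEnd ℂ) (a (m + q') h) := by
          apply sum_support_eq
          intro h hh
          have h2 : a (m + q') h ≠ 0 := fun hz => hh (by rw [hz, map_zero, mul_zero])
          have := ham _ _ h2
          simp only [Finset.mem_Icc]
          omega
  rw [Finset.sum_congr rfl fun m _ => hin m]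
  calc ∑ m ∈ Icc (1 - (Q:ℤ)) (M:ℤ), ∑ h ∈ Icc (1:ℤ) (H:ℤ),
        a (m + q) (h + (r - r')) * (starRingEnd ℂ) (a (m + q') h)
      = ∑ m ∈ Icc (1 - (Q:ℤ)) (M:ℤ), ∑ h ∈ Icc (1:ℤ) (H:ℤ),
          a ((m + q') + (q - q')) (h + (r - r')) * (starRingEnd ℂ) (a (m + q') h) := by
        refine Finset.sum_congr rfl fun m _ => Finset.sum_congr rfl fun h _ => ?_
        rw [show m + q' + (q - q') = m + q by ring]
    _ = ∑ m ∈ Icc (1 - (Q:ℤ) + q') ((M:ℤ) + q'), ∑ h ∈ Icc (1:ℤ) (H:ℤ),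
          a (m + (q - q')) (h + (r - r')) * (starRingEnd ℂ) (a m h) :=
        (sum_shift (1 - (Q:ℤ)) (M:ℤ) q'
          (fun m => ∑ h ∈ Icc (1:ℤ) (H:ℤ),
            a (m + (q - q')) (h + (r - r')) * (starRingEnd ℂ) (a m h))).symm
    _ = ∑ m ∈ Icc (1:ℤ) (M:ℤ), ∑ h ∈ Icc (1:ℤ) (H:ℤ),
          a (m + (q - q')) (h + (r - r')) * (starRingEnd ℂ) (a m h) := by
        apply sum_support_eq
        intro m hm
        obtain ⟨h, -, hah⟩ := Finset.exists_ne_zero_of_sum_ne_zero hm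
        have h2 : a m h ≠ 0 := fun hz => hah (by rw [hz, map_zero, mul_zero])
        have := ham _ _ h2
        simp only [Finset.mem_Icc]
        omega

private lemma corrW (M H Q R : ℕ) (a : ℤ → ℤ → ℂ)
    (ha : ∀ m h : ℤ, (m < 1 ∨ (M : ℤ) < m ∨ h < 1 ∨ (H : ℤ) < h) → a m h = 0)
    (q r : ℤ) :
    ∑ m ∈ Icc (1 - (Q:ℤ)) (M:ℤ), ∑ h ∈ Icc (1 - (R:ℤ)) (H:ℤ),
        a (m + q) h * (starRingEnd ℂ) (a m (h + r))
      = ∑ m ∈ Icc (1:ℤ) (M:ℤ), ∑ h ∈ Icc (1:ℤ) (H:ℤ),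
        a (m + q) (h + (-r)) * (starRingEnd ℂ) (a m h) := by
  have ham : ∀ m h : ℤ, a m h ≠ 0 → 1 ≤ m ∧ m ≤ (M:ℤ) ∧ 1 ≤ h ∧ h ≤ (H:ℤ) := by
    intro m h hmh
    refine ⟨?_, ?_, ?_, ?_⟩ <;> by_contra hc <;> exact hmh (ha m h (by omega))
  have hin : ∀ m : ℤ, ∑ h ∈ Icc (1 - (R:ℤ)) (H:ℤ), a (m + q) h * (starRingEnd ℂ) (a m (h + r))
      = ∑ h ∈ Icc (1:ℤ) (H:ℤ), a (m + q) (h + (-r)) * (starRingEnd ℂ) (a m h) := by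
    intro m
    calc ∑ h ∈ Icc (1 - (R:ℤ)) (H:ℤ), a (m + q) h * (starRingEnd ℂ) (a m (h + r))
        = ∑ h ∈ Icc (1 - (R:ℤ)) (H:ℤ),
            a (m + q) ((h + r) + (-r)) * (starRingEnd ℂ) (a m (h + r)) := by
          refine Finset.sum_congr rfl fun h _ => ?_
          rw [show h + r + (-r) = h by ring]
      _ = ∑ h ∈ Icc (1 - (R:ℤ) + r) ((H:ℤ) + r),
            a (m + q) (h + (-r)) * (starRingEnd ℂ) (a m h) :=
          (sum_shift (1 - (R:ℤ)) (H:ℤ) r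
            (fun h => a (m + q) (h + (-r)) * (starRingEnd ℂ) (a m h))).symm
      _ = ∑ h ∈ Icc (1:ℤ) (H:ℤ), a (m + q) (h + (-r)) * (starRingEnd ℂ) (a m h) := by
          apply sum_support_eq
          intro h hh
          have h1 : a (m + q) (h + (-r)) ≠ 0 := fun hz => hh (by rw [hz, zero_mul])
          have h2 : a m h ≠ 0 := fun hz => hh (by rw [hz, map_zero, mul_zero])
          have e1 := ham _ _ h1
          have e2 := ham _ _ h2
          simp only [Finset.mem_Icc]
          omega
  rw [Finset.sum_congr rfl fun m _ => hin m]
  apply sum_support_eq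
  intro m hm
  obtain ⟨h, -, hah⟩ := Finset.exists_ne_zero_of_sum_ne_zero hm
  have h2 : a m h ≠ 0 := fun hz => hah (by rw [hz, map_zero, mul_zero])
  have := ham _ _ h2
  simp only [Finset.mem_Icc]
  omega

private lemma fiber_card_le (Q : ℕ) (u : ℤ) :
    (((Finset.Ico (0:ℤ) (Q:ℤ)) ×ˢ (Finset.Ico (0:ℤ) (Q:ℤ))).filter
      (fun p => p.1 - p.2 = u)).card ≤ ((Q:ℤ) - |u|).toNat := by
  have : (((Finset.Ico (0:ℤ) (Q:ℤ)) ×ˢ (Finset.Ico (0:ℤ) (Q:ℤ))).filter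
      (fun p => p.1 - p.2 = u)).card ≤ (Finset.Ico (max 0 (-u)) (min (Q:ℤ) ((Q:ℤ) - u))).card := by
    apply Finset.card_le_card_of_injOn (fun p => p.2)
    · intro p hp
      simp only [Finset.mem_coe, Finset.mem_filter, Finset.mem_product, Finset.mem_Ico] at hp
      simp only [Finset.mem_coe, Finset.mem_Ico, le_max_iff, lt_min_iff]
      omega
    · intro p hp p' hp' hpp
      simp only [coe_filter, Set.mem_setOf_eq] at hp hp'
      have e1 := hp.2
      have e2 := hp'.2
      have e3 : p.2 = p'.2 := hpp
      have : p.1 = p'.1 := by omega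
      exact Prod.ext this e3
  refine this.trans ?_
  rw [Int.card_Ico]
  rcases abs_cases u with ⟨h1, h2⟩ | ⟨h1, h2⟩ <;> omega

private lemma count_le (Q : ℕ) (f : ℤ → ℝ) (hf : ∀ u, 0 ≤ f u) :
    ∑ q ∈ Ico (0:ℤ) (Q:ℤ), ∑ q' ∈ Ico (0:ℤ) (Q:ℤ), f (q - q')
      ≤ ∑ u ∈ Ioo (-(Q:ℤ)) (Q:ℤ), (((Q:ℤ) - |u|) : ℝ) * f u := by
  rw [← Finset.sum_product']
  rw [← Finset.sum_fiberwise_of_maps_to (g := fun p : ℤ × ℤ => p.1 - p.2)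
    (t := Ioo (-(Q:ℤ)) (Q:ℤ)) (fun p hp => by
      simp only [Finset.mem_product, Finset.mem_Ico] at hp
      simp only [Finset.mem_Ioo]; omega)]
  apply Finset.sum_le_sum
  intro u hu
  have : ∑ p ∈ ((Finset.Ico (0:ℤ) (Q:ℤ)) ×ˢ (Finset.Ico (0:ℤ) (Q:ℤ))).filter
      (fun p => p.1 - p.2 = u), f (p.1 - p.2)
      = ∑ p ∈ ((Finset.Ico (0:ℤ) (Q:ℤ)) ×ˢ (Finset.Ico (0:ℤ) (Q:ℤ))).filter
      (fun p => p.1 - p.2 = u), f u := by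
    apply Finset.sum_congr rfl
    intro p hp
    simp only [Finset.mem_filter] at hp
    rw [hp.2]
  rw [this, Finset.sum_const, nsmul_eq_mul]
  apply mul_le_mul_of_nonneg_right _ (hf u)
  have h1 := fiber_card_le Q u
  have h2 : (0:ℤ) ≤ (Q:ℤ) - |u| := by
    simp only [Finset.mem_Ioo] at hu
    rcases abs_cases u with ⟨e1, _⟩ | ⟨e1, _⟩ <;> omega
  calc ((((Finset.Ico (0:ℤ) (Q:ℤ)) ×ˢ (Finset.Ico (0:ℤ) (Q:ℤ))).filter
      (fun p => p.1 - p.2 = u)).card : ℝ) ≤ ((((Q:ℤ) - |u|).toNat : ℕ) : ℝ) := by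
        exact_mod_cast h1
    _ = (((Q:ℤ) - |u|) : ℝ) := by
        exact_mod_cast congrArg (Int.cast : ℤ → ℝ) (Int.toNat_of_nonneg h2)


theorem weyl_van_der_corput_AxA :
    ∃ C : ℝ, 0 < C ∧
      ∀ (M H : ℕ), 0 < M → 0 < H →
      ∀ a : ℤ → ℤ → ℂ,
        (∀ m h : ℤ, (m < 1 ∨ (M : ℤ) < m ∨ h < 1 ∨ (H : ℤ) < h) → a m h = 0) →
        ∀ Q R : ℕ, 1 ≤ Q → Q ≤ M → 1 ≤ R → R ≤ H →
        ‖∑ m ∈ Finset.Icc (1 : ℤ) (M : ℤ), ∑ h ∈ Finset.Icc (1 : ℤ) (H : ℤ), a m h‖ ^ 2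
          ≤ C * ((M : ℝ) * H / (Q * R)) *
            ∑ q ∈ Finset.Ioo (-(Q : ℤ)) (Q : ℤ), ∑ r ∈ Finset.Ioo (-(R : ℤ)) (R : ℤ),
              (1 - |(q : ℝ)| / Q) * (1 - |(r : ℝ)| / R) *
                ‖∑ m ∈ Finset.Icc (1 - (Q : ℤ)) (M : ℤ),
                    ∑ h ∈ Finset.Icc (1 - (R : ℤ)) (H : ℤ),
                      a (m + q) h * (starRingEnd ℂ) (a m (h + r))‖ := by
  refine ⟨4, by norm_num, ?_⟩
  intro M H hM hH a ha Q R hQ1 hQM hR1 hRH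
  set P : Finset (ℤ × ℤ) := (Icc (1 - (Q:ℤ)) (M:ℤ)) ×ˢ (Icc (1 - (R:ℤ)) (H:ℤ)) with hP
  have coeffQ : ∀ u ∈ Ioo (-(Q:ℤ)) (Q:ℤ), (0:ℝ) ≤ (((Q:ℤ) - |u|) : ℝ) := by
    intro u hu
    have : (0:ℤ) ≤ (Q:ℤ) - |u| := by
      simp only [Finset.mem_Ioo] at hu
      rcases abs_cases u with ⟨e1, _⟩ | ⟨e1, _⟩ <;> omega
    exact_mod_cast this
  have coeffR : ∀ v ∈ Ioo (-(R:ℤ)) (R:ℤ), (0:ℝ) ≤ (((R:ℤ) - |v|) : ℝ) := by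
    intro v hv
    have : (0:ℤ) ≤ (R:ℤ) - |v| := by
      simp only [Finset.mem_Ioo] at hv
      rcases abs_cases v with ⟨e1, _⟩ | ⟨e1, _⟩ <;> omega
    exact_mod_cast this
  -- step 1
  have h1 : ∑ p ∈ P, ∑ q ∈ Ico (0:ℤ) (Q:ℤ), ∑ r ∈ Ico (0:ℤ) (R:ℤ), a (p.1 + q) (p.2 + r)
      = ((Q * R : ℕ) : ℂ) * ∑ m ∈ Icc (1:ℤ) (M:ℤ), ∑ h ∈ Icc (1:ℤ) (H:ℤ), a m h := by
    calc ∑ p ∈ P, ∑ q ∈ Ico (0:ℤ) (Q:ℤ), ∑ r ∈ Ico (0:ℤ) (R:ℤ), a (p.1 + q) (p.2 + r)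
        = ∑ q ∈ Ico (0:ℤ) (Q:ℤ), ∑ p ∈ P, ∑ r ∈ Ico (0:ℤ) (R:ℤ), a (p.1 + q) (p.2 + r) :=
          Finset.sum_comm
      _ = ∑ q ∈ Ico (0:ℤ) (Q:ℤ), ∑ r ∈ Ico (0:ℤ) (R:ℤ), ∑ p ∈ P, a (p.1 + q) (p.2 + r) :=
          Finset.sum_congr rfl fun q _ => Finset.sum_comm
      _ = ∑ _q ∈ Ico (0:ℤ) (Q:ℤ), ∑ _r ∈ Ico (0:ℤ) (R:ℤ),
            ∑ m ∈ Icc (1:ℤ) (M:ℤ), ∑ h ∈ Icc (1:ℤ) (H:ℤ), a m h := by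
          refine Finset.sum_congr rfl fun q hq => Finset.sum_congr rfl fun r hr => ?_
          simp only [Finset.mem_Ico] at hq hr
          rw [hP, Finset.sum_product]
          exact shiftA M H Q R a ha q r hq.1 hq.2 hr.1 hr.2
      _ = ((Q * R : ℕ) : ℂ) * ∑ m ∈ Icc (1:ℤ) (M:ℤ), ∑ h ∈ Icc (1:ℤ) (H:ℤ), a m h := by
          rw [Finset.sum_const, Finset.sum_const, Int.card_Ico, Int.card_Ico, sub_zero, sub_zero,
            Int.toNat_natCast, Int.toNat_natCast, smul_smul, nsmul_eq_mul]
  -- expansion of |b|^2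
  have hbconj : ∀ p : ℤ × ℤ,
      (∑ q ∈ Ico (0:ℤ) (Q:ℤ), ∑ r ∈ Ico (0:ℤ) (R:ℤ), a (p.1 + q) (p.2 + r)) *
        (starRingEnd ℂ) (∑ q ∈ Ico (0:ℤ) (Q:ℤ), ∑ r ∈ Ico (0:ℤ) (R:ℤ), a (p.1 + q) (p.2 + r))
      = ∑ q ∈ Ico (0:ℤ) (Q:ℤ), ∑ q' ∈ Ico (0:ℤ) (Q:ℤ), ∑ r ∈ Ico (0:ℤ) (R:ℤ),
          ∑ r' ∈ Ico (0:ℤ) (R:ℤ),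
          a (p.1 + q) (p.2 + r) * (starRingEnd ℂ) (a (p.1 + q') (p.2 + r')) := by
    intro p
    rw [map_sum, Finset.sum_mul_sum]
    refine Finset.sum_congr rfl fun q _ => Finset.sum_congr rfl fun q' _ => ?_
    rw [map_sum, Finset.sum_mul_sum]
  have e : ∑ p ∈ P,
      (∑ q ∈ Ico (0:ℤ) (Q:ℤ), ∑ r ∈ Ico (0:ℤ) (R:ℤ), a (p.1 + q) (p.2 + r)) *
        (starRingEnd ℂ) (∑ q ∈ Ico (0:ℤ) (Q:ℤ), ∑ r ∈ Ico (0:ℤ) (R:ℤ), a (p.1 + q) (p.2 + r))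
      = ∑ q ∈ Ico (0:ℤ) (Q:ℤ), ∑ q' ∈ Ico (0:ℤ) (Q:ℤ), ∑ r ∈ Ico (0:ℤ) (R:ℤ),
          ∑ r' ∈ Ico (0:ℤ) (R:ℤ),
          ∑ m ∈ Icc (1:ℤ) (M:ℤ), ∑ h ∈ Icc (1:ℤ) (H:ℤ),
            a (m + (q - q')) (h + (r - r')) * (starRingEnd ℂ) (a m h) := by
    rw [Finset.sum_congr rfl fun p _ => hbconj p]
    calc ∑ p ∈ P, ∑ q ∈ Ico (0:ℤ) (Q:ℤ), ∑ q' ∈ Ico (0:ℤ) (Q:ℤ), ∑ r ∈ Ico (0:ℤ) (R:ℤ),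
            ∑ r' ∈ Ico (0:ℤ) (R:ℤ),
            a (p.1 + q) (p.2 + r) * (starRingEnd ℂ) (a (p.1 + q') (p.2 + r'))
        = ∑ q ∈ Ico (0:ℤ) (Q:ℤ), ∑ p ∈ P, ∑ q' ∈ Ico (0:ℤ) (Q:ℤ), ∑ r ∈ Ico (0:ℤ) (R:ℤ),
            ∑ r' ∈ Ico (0:ℤ) (R:ℤ),
            a (p.1 + q) (p.2 + r) * (starRingEnd ℂ) (a (p.1 + q') (p.2 + r')) :=
          Finset.sum_comm
      _ = ∑ q ∈ Ico (0:ℤ) (Q:ℤ), ∑ q' ∈ Ico (0:ℤ) (Q:ℤ), ∑ p ∈ P, ∑ r ∈ Ico (0:ℤ) (R:ℤ),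
            ∑ r' ∈ Ico (0:ℤ) (R:ℤ),
            a (p.1 + q) (p.2 + r) * (starRingEnd ℂ) (a (p.1 + q') (p.2 + r')) :=
          Finset.sum_congr rfl fun q _ => Finset.sum_comm
      _ = ∑ q ∈ Ico (0:ℤ) (Q:ℤ), ∑ q' ∈ Ico (0:ℤ) (Q:ℤ), ∑ r ∈ Ico (0:ℤ) (R:ℤ), ∑ p ∈ P,
            ∑ r' ∈ Ico (0:ℤ) (R:ℤ),
            a (p.1 + q) (p.2 + r) * (starRingEnd ℂ) (a (p.1 + q') (p.2 + r')) :=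
          Finset.sum_congr rfl fun q _ => Finset.sum_congr rfl fun q' _ => Finset.sum_comm
      _ = ∑ q ∈ Ico (0:ℤ) (Q:ℤ), ∑ q' ∈ Ico (0:ℤ) (Q:ℤ), ∑ r ∈ Ico (0:ℤ) (R:ℤ),
            ∑ r' ∈ Ico (0:ℤ) (R:ℤ), ∑ p ∈ P,
            a (p.1 + q) (p.2 + r) * (starRingEnd ℂ) (a (p.1 + q') (p.2 + r')) :=
          Finset.sum_congr rfl fun q _ => Finset.sum_congr rfl fun q' _ =>
            Finset.sum_congr rfl fun r _ => Finset.sum_comm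
      _ = ∑ q ∈ Ico (0:ℤ) (Q:ℤ), ∑ q' ∈ Ico (0:ℤ) (Q:ℤ), ∑ r ∈ Ico (0:ℤ) (R:ℤ),
            ∑ r' ∈ Ico (0:ℤ) (R:ℤ),
            ∑ m ∈ Icc (1:ℤ) (M:ℤ), ∑ h ∈ Icc (1:ℤ) (H:ℤ),
              a (m + (q - q')) (h + (r - r')) * (starRingEnd ℂ) (a m h) := by
          refine Finset.sum_congr rfl fun q _ => Finset.sum_congr rfl fun q' hq' =>
            Finset.sum_congr rfl fun r _ => Finset.sum_congr rfl fun r' hr' => ?_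
          simp only [Finset.mem_Ico] at hq' hr'
          rw [hP, Finset.sum_product]
          exact corrA M H Q R a ha q q' r r' hq'.1 hq'.2.le hr'.1 hr'.2.le
  -- Cauchy–Schwarz side: sum of |b|^2 bounded by correlation sums
  have h3 : ∑ p ∈ P, ‖∑ q ∈ Ico (0:ℤ) (Q:ℤ), ∑ r ∈ Ico (0:ℤ) (R:ℤ), a (p.1 + q) (p.2 + r)‖ ^ 2
      ≤ ∑ q ∈ Ico (0:ℤ) (Q:ℤ), ∑ q' ∈ Ico (0:ℤ) (Q:ℤ), ∑ r ∈ Ico (0:ℤ) (R:ℤ),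
          ∑ r' ∈ Ico (0:ℤ) (R:ℤ),
          ‖∑ m ∈ Icc (1:ℤ) (M:ℤ), ∑ h ∈ Icc (1:ℤ) (H:ℤ),
            a (m + (q - q')) (h + (r - r')) * (starRingEnd ℂ) (a m h)‖ := by
    calc ∑ p ∈ P, ‖∑ q ∈ Ico (0:ℤ) (Q:ℤ), ∑ r ∈ Ico (0:ℤ) (R:ℤ), a (p.1 + q) (p.2 + r)‖ ^ 2
        = (∑ p ∈ P,
            (∑ q ∈ Ico (0:ℤ) (Q:ℤ), ∑ r ∈ Ico (0:ℤ) (R:ℤ), a (p.1 + q) (p.2 + r)) *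
              (starRingEnd ℂ)
                (∑ q ∈ Ico (0:ℤ) (Q:ℤ), ∑ r ∈ Ico (0:ℤ) (R:ℤ), a (p.1 + q) (p.2 + r))).re := by
          rw [Complex.re_sum]
          refine Finset.sum_congr rfl fun p _ => ?_
          rw [Complex.mul_conj]
          simp [Complex.normSq_eq_norm_sq, ← Complex.ofReal_pow]
      _ = (∑ q ∈ Ico (0:ℤ) (Q:ℤ), ∑ q' ∈ Ico (0:ℤ) (Q:ℤ), ∑ r ∈ Ico (0:ℤ) (R:ℤ),
            ∑ r' ∈ Ico (0:ℤ) (R:ℤ),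
            ∑ m ∈ Icc (1:ℤ) (M:ℤ), ∑ h ∈ Icc (1:ℤ) (H:ℤ),
              a (m + (q - q')) (h + (r - r')) * (starRingEnd ℂ) (a m h)).re := by rw [e]
      _ ≤ ‖∑ q ∈ Ico (0:ℤ) (Q:ℤ), ∑ q' ∈ Ico (0:ℤ) (Q:ℤ), ∑ r ∈ Ico (0:ℤ) (R:ℤ),
            ∑ r' ∈ Ico (0:ℤ) (R:ℤ),
            ∑ m ∈ Icc (1:ℤ) (M:ℤ), ∑ h ∈ Icc (1:ℤ) (H:ℤ),
              a (m + (q - q')) (h + (r - r')) * (starRingEnd ℂ) (a m h)‖ :=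
          Complex.re_le_norm _
      _ ≤ ∑ q ∈ Ico (0:ℤ) (Q:ℤ), ∑ q' ∈ Ico (0:ℤ) (Q:ℤ), ∑ r ∈ Ico (0:ℤ) (R:ℤ),
            ∑ r' ∈ Ico (0:ℤ) (R:ℤ),
            ‖∑ m ∈ Icc (1:ℤ) (M:ℤ), ∑ h ∈ Icc (1:ℤ) (H:ℤ),
              a (m + (q - q')) (h + (r - r')) * (starRingEnd ℂ) (a m h)‖ := by
          refine (norm_sum_le _ _).trans (Finset.sum_le_sum fun q _ => ?_)
          refine (norm_sum_le _ _).trans (Finset.sum_le_sum fun q' _ => ?_)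
          exact (norm_sum_le _ _).trans (Finset.sum_le_sum fun r _ => norm_sum_le _ _)
  -- counting
  have h5 : ∑ q ∈ Ico (0:ℤ) (Q:ℤ), ∑ q' ∈ Ico (0:ℤ) (Q:ℤ), ∑ r ∈ Ico (0:ℤ) (R:ℤ),
        ∑ r' ∈ Ico (0:ℤ) (R:ℤ),
        ‖∑ m ∈ Icc (1:ℤ) (M:ℤ), ∑ h ∈ Icc (1:ℤ) (H:ℤ),
          a (m + (q - q')) (h + (r - r')) * (starRingEnd ℂ) (a m h)‖
      ≤ ∑ u ∈ Ioo (-(Q:ℤ)) (Q:ℤ), (((Q:ℤ) - |u|) : ℝ) *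
          ∑ v ∈ Ioo (-(R:ℤ)) (R:ℤ), (((R:ℤ) - |v|) : ℝ) *
            ‖∑ m ∈ Icc (1:ℤ) (M:ℤ), ∑ h ∈ Icc (1:ℤ) (H:ℤ),
              a (m + u) (h + v) * (starRingEnd ℂ) (a m h)‖ := by
    have step1 : ∑ q ∈ Ico (0:ℤ) (Q:ℤ), ∑ q' ∈ Ico (0:ℤ) (Q:ℤ), ∑ r ∈ Ico (0:ℤ) (R:ℤ),
          ∑ r' ∈ Ico (0:ℤ) (R:ℤ),
          ‖∑ m ∈ Icc (1:ℤ) (M:ℤ), ∑ h ∈ Icc (1:ℤ) (H:ℤ),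
            a (m + (q - q')) (h + (r - r')) * (starRingEnd ℂ) (a m h)‖
        ≤ ∑ u ∈ Ioo (-(Q:ℤ)) (Q:ℤ), (((Q:ℤ) - |u|) : ℝ) *
            (∑ r ∈ Ico (0:ℤ) (R:ℤ), ∑ r' ∈ Ico (0:ℤ) (R:ℤ),
              ‖∑ m ∈ Icc (1:ℤ) (M:ℤ), ∑ h ∈ Icc (1:ℤ) (H:ℤ),
                a (m + u) (h + (r - r')) * (starRingEnd ℂ) (a m h)‖) :=
      count_le Q (fun u => ∑ r ∈ Ico (0:ℤ) (R:ℤ), ∑ r' ∈ Ico (0:ℤ) (R:ℤ),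
        ‖∑ m ∈ Icc (1:ℤ) (M:ℤ), ∑ h ∈ Icc (1:ℤ) (H:ℤ),
          a (m + u) (h + (r - r')) * (starRingEnd ℂ) (a m h)‖)
        (fun u => Finset.sum_nonneg fun r _ => Finset.sum_nonneg fun r' _ => norm_nonneg _)
    refine step1.trans (Finset.sum_le_sum fun u hu => ?_)
    refine mul_le_mul_of_nonneg_left ?_ (coeffQ u hu)
    exact count_le R (fun v => ‖∑ m ∈ Icc (1:ℤ) (M:ℤ), ∑ h ∈ Icc (1:ℤ) (H:ℤ),
      a (m + u) (h + v) * (starRingEnd ℂ) (a m h)‖) (fun v => norm_nonneg _)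
  -- cardinality
  have hcard : ((P.card : ℕ) : ℝ) ≤ 4 * (M:ℝ) * (H:ℝ) := by
    rw [hP, Finset.card_product, Int.card_Icc, Int.card_Icc]
    have e1 : ((M:ℤ) + 1 - (1 - (Q:ℤ))).toNat = M + Q := by omega
    have e2 : ((H:ℤ) + 1 - (1 - (R:ℤ))).toNat = H + R := by omega
    rw [e1, e2]
    have hn : (M + Q) * (H + R) ≤ 4 * (M * H) := by
      calc (M + Q) * (H + R) ≤ (M + M) * (H + H) := Nat.mul_le_mul (by omega) (by omega)
        _ = 4 * (M * H) := by ring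
    calc (((M + Q) * (H + R) : ℕ) : ℝ) ≤ ((4 * (M * H) : ℕ) : ℝ) := by exact_mod_cast hn
      _ = 4 * (M:ℝ) * (H:ℝ) := by push_cast; ring
  have hSnn : (0:ℝ) ≤ ∑ u ∈ Ioo (-(Q:ℤ)) (Q:ℤ), (((Q:ℤ) - |u|) : ℝ) *
      ∑ v ∈ Ioo (-(R:ℤ)) (R:ℤ), (((R:ℤ) - |v|) : ℝ) *
        ‖∑ m ∈ Icc (1:ℤ) (M:ℤ), ∑ h ∈ Icc (1:ℤ) (H:ℤ),
          a (m + u) (h + v) * (starRingEnd ℂ) (a m h)‖ :=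
    Finset.sum_nonneg fun u hu => mul_nonneg (coeffQ u hu)
      (Finset.sum_nonneg fun v hv => mul_nonneg (coeffR v hv) (norm_nonneg _))
  -- key inequality
  have hnorm : ‖∑ p ∈ P, ∑ q ∈ Ico (0:ℤ) (Q:ℤ), ∑ r ∈ Ico (0:ℤ) (R:ℤ), a (p.1 + q) (p.2 + r)‖
      = ((Q:ℝ) * R) * ‖∑ m ∈ Icc (1:ℤ) (M:ℤ), ∑ h ∈ Icc (1:ℤ) (H:ℤ), a m h‖ := by
    rw [h1, norm_mul, Complex.norm_natCast]
    push_cast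
    ring
  have key : (((Q:ℝ) * R) * ‖∑ m ∈ Icc (1:ℤ) (M:ℤ), ∑ h ∈ Icc (1:ℤ) (H:ℤ), a m h‖) ^ 2
      ≤ (4 * (M:ℝ) * H) * ∑ u ∈ Ioo (-(Q:ℤ)) (Q:ℤ), (((Q:ℤ) - |u|) : ℝ) *
          ∑ v ∈ Ioo (-(R:ℤ)) (R:ℤ), (((R:ℤ) - |v|) : ℝ) *
            ‖∑ m ∈ Icc (1:ℤ) (M:ℤ), ∑ h ∈ Icc (1:ℤ) (H:ℤ),
              a (m + u) (h + v) * (starRingEnd ℂ) (a m h)‖ := by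
    calc (((Q:ℝ) * R) * ‖∑ m ∈ Icc (1:ℤ) (M:ℤ), ∑ h ∈ Icc (1:ℤ) (H:ℤ), a m h‖) ^ 2
        = ‖∑ p ∈ P, ∑ q ∈ Ico (0:ℤ) (Q:ℤ), ∑ r ∈ Ico (0:ℤ) (R:ℤ),
            a (p.1 + q) (p.2 + r)‖ ^ 2 := by rw [hnorm]
      _ ≤ (∑ p ∈ P, ‖∑ q ∈ Ico (0:ℤ) (Q:ℤ), ∑ r ∈ Ico (0:ℤ) (R:ℤ),
            a (p.1 + q) (p.2 + r)‖) ^ 2 :=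
          pow_le_pow_left₀ (norm_nonneg _) (norm_sum_le _ _) 2
      _ ≤ (P.card : ℝ) * ∑ p ∈ P, ‖∑ q ∈ Ico (0:ℤ) (Q:ℤ), ∑ r ∈ Ico (0:ℤ) (R:ℤ),
            a (p.1 + q) (p.2 + r)‖ ^ 2 := sq_sum_le_card_mul_sum_sq
      _ ≤ (P.card : ℝ) * ∑ u ∈ Ioo (-(Q:ℤ)) (Q:ℤ), (((Q:ℤ) - |u|) : ℝ) *
            ∑ v ∈ Ioo (-(R:ℤ)) (R:ℤ), (((R:ℤ) - |v|) : ℝ) *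
              ‖∑ m ∈ Icc (1:ℤ) (M:ℤ), ∑ h ∈ Icc (1:ℤ) (H:ℤ),
                a (m + u) (h + v) * (starRingEnd ℂ) (a m h)‖ :=
          mul_le_mul_of_nonneg_left (h3.trans h5) (Nat.cast_nonneg _)
      _ ≤ (4 * (M:ℝ) * H) * ∑ u ∈ Ioo (-(Q:ℤ)) (Q:ℤ), (((Q:ℤ) - |u|) : ℝ) *
            ∑ v ∈ Ioo (-(R:ℤ)) (R:ℤ), (((R:ℤ) - |v|) : ℝ) *
              ‖∑ m ∈ Icc (1:ℤ) (M:ℤ), ∑ h ∈ Icc (1:ℤ) (H:ℤ),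
                a (m + u) (h + v) * (starRingEnd ℂ) (a m h)‖ :=
          mul_le_mul_of_nonneg_right hcard hSnn
  -- rewrite the goal sum
  have hQ0 : (0:ℝ) < Q := by exact_mod_cast hQ1.trans_lt' Nat.zero_lt_one
  have hR0 : (0:ℝ) < R := by exact_mod_cast hR1.trans_lt' Nat.zero_lt_one
  have hG : ∑ q ∈ Finset.Ioo (-(Q : ℤ)) (Q : ℤ), ∑ r ∈ Finset.Ioo (-(R : ℤ)) (R : ℤ),
        (1 - |(q : ℝ)| / Q) * (1 - |(r : ℝ)| / R) *
          ‖∑ m ∈ Finset.Icc (1 - (Q : ℤ)) (M : ℤ),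
              ∑ h ∈ Finset.Icc (1 - (R : ℤ)) (H : ℤ),
                a (m + q) h * (starRingEnd ℂ) (a m (h + r))‖
      = (1 / ((Q:ℝ) * R)) * ∑ u ∈ Ioo (-(Q:ℤ)) (Q:ℤ), (((Q:ℤ) - |u|) : ℝ) *
          ∑ v ∈ Ioo (-(R:ℤ)) (R:ℤ), (((R:ℤ) - |v|) : ℝ) *
            ‖∑ m ∈ Icc (1:ℤ) (M:ℤ), ∑ h ∈ Icc (1:ℤ) (H:ℤ),
              a (m + u) (h + v) * (starRingEnd ℂ) (a m h)‖ := by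
    rw [Finset.mul_sum]
    refine Finset.sum_congr rfl fun q hq => ?_
    calc ∑ r ∈ Finset.Ioo (-(R : ℤ)) (R : ℤ),
          (1 - |(q : ℝ)| / Q) * (1 - |(r : ℝ)| / R) *
            ‖∑ m ∈ Finset.Icc (1 - (Q : ℤ)) (M : ℤ),
                ∑ h ∈ Finset.Icc (1 - (R : ℤ)) (H : ℤ),
                  a (m + q) h * (starRingEnd ℂ) (a m (h + r))‖
        = ∑ r ∈ Finset.Ioo (-(R : ℤ)) (R : ℤ),
            (1 - |(q : ℝ)| / Q) * (1 - |(r : ℝ)| / R) *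
              ‖∑ m ∈ Icc (1:ℤ) (M:ℤ), ∑ h ∈ Icc (1:ℤ) (H:ℤ),
                a (m + q) (h + (-r)) * (starRingEnd ℂ) (a m h)‖ :=
          Finset.sum_congr rfl fun r _ => by rw [corrW M H Q R a ha q r]
      _ = ∑ v ∈ Finset.Ioo (-(R : ℤ)) (R : ℤ),
            (1 - |(q : ℝ)| / Q) * (1 - |(v : ℝ)| / R) *
              ‖∑ m ∈ Icc (1:ℤ) (M:ℤ), ∑ h ∈ Icc (1:ℤ) (H:ℤ),
                a (m + q) (h + v) * (starRingEnd ℂ) (a m h)‖ := by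
          refine Finset.sum_equiv (Equiv.neg ℤ) (fun i => ?_) (fun i hi => ?_)
          · simp only [Finset.mem_Ioo, Equiv.neg_apply]
            omega
          · simp only [Equiv.neg_apply, Int.cast_neg, abs_neg]
      _ = (1 / ((Q:ℝ) * R)) * ((((Q:ℤ) - |q|) : ℝ) *
            ∑ v ∈ Ioo (-(R:ℤ)) (R:ℤ), (((R:ℤ) - |v|) : ℝ) *
              ‖∑ m ∈ Icc (1:ℤ) (M:ℤ), ∑ h ∈ Icc (1:ℤ) (H:ℤ),
                a (m + q) (h + v) * (starRingEnd ℂ) (a m h)‖) := by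
          rw [Finset.mul_sum, Finset.mul_sum]
          refine Finset.sum_congr rfl fun v hv => ?_
          have e1 : (((Q:ℤ) - |q|) : ℝ) = (Q:ℝ) - |(q:ℝ)| := by push_cast; ring
          have e2 : (((R:ℤ) - |v|) : ℝ) = (R:ℝ) - |(v:ℝ)| := by push_cast; ring
          rw [e1, e2]
          field_simp
  rw [hG]
  rw [show (4:ℝ) * ((M : ℝ) * H / (Q * R)) * ((1 / ((Q:ℝ) * R)) *
      ∑ u ∈ Ioo (-(Q:ℤ)) (Q:ℤ), (((Q:ℤ) - |u|) : ℝ) *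
        ∑ v ∈ Ioo (-(R:ℤ)) (R:ℤ), (((R:ℤ) - |v|) : ℝ) *
          ‖∑ m ∈ Icc (1:ℤ) (M:ℤ), ∑ h ∈ Icc (1:ℤ) (H:ℤ),
            a (m + u) (h + v) * (starRingEnd ℂ) (a m h)‖)
      = ((4 * (M:ℝ) * H) * ∑ u ∈ Ioo (-(Q:ℤ)) (Q:ℤ), (((Q:ℤ) - |u|) : ℝ) *
          ∑ v ∈ Ioo (-(R:ℤ)) (R:ℤ), (((R:ℤ) - |v|) : ℝ) *
            ‖∑ m ∈ Icc (1:ℤ) (M:ℤ), ∑ h ∈ Icc (1:ℤ) (H:ℤ),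
              a (m + u) (h + v) * (starRingEnd ℂ) (a m h)‖) / (((Q:ℝ) * R) ^ 2) by
    field_simp]
  rw [le_div_iff₀ (by positivity)]
  calc ‖∑ m ∈ Icc (1:ℤ) (M:ℤ), ∑ h ∈ Icc (1:ℤ) (H:ℤ), a m h‖ ^ 2 * ((Q:ℝ) * R) ^ 2
      = (((Q:ℝ) * R) * ‖∑ m ∈ Icc (1:ℤ) (M:ℤ), ∑ h ∈ Icc (1:ℤ) (H:ℤ), a m h‖) ^ 2 := by ring
    _ ≤ _ := key
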